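/- Let M be a simple full Hilbert C*-module over A (i.e., M has no nontrivial closed left A-submodules) and δ: D(δ) ⊆ M → M a generalized derivation. Then either δ is closable (as an unbounded operator) or the range of δ is dense in M. -/

import Mathlib

/-- The core axioms of a (left) Hilbert C*-module over a C*-algebra `A`: an `A`-valued
inner product `inn`, `A`-linear in the first variable, conjugate-symmetric via `star`,
and inducing the norm of `M`. -/
structure IsHilbertModule (A : Type*) {M : Type*} [CStarAlgebra A] [NormedAddCommGroup M]
    [NormedSpace ℂ M] [Module A M] [IsScalarTower ℂ A M] (inn : M → M → A) : Prop where
  add_left : ∀ x y z : M, inn (x + y) z = inn x z + inn y z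
  smul_left : ∀ (a : A) (x y : M), inn (a • x) y = a * inn x y
  star_inner : ∀ x y : M, star (inn x y) = inn y x
  norm_eq : ∀ x : M, ‖x‖ = Real.sqrt ‖inn x x‖

/-- A Hilbert C*-module is *full* if the closed linear span of the inner products is all
of `A`. -/
def IsFullModule (A : Type*) {M : Type*} [CStarAlgebra A] [NormedAddCommGroup M]
    [NormedSpace ℂ M] [Module A M] [IsScalarTower ℂ A M] (inn : M → M → A) : Prop :=
  Dense ((Submodule.span ℂ {a : A | ∃ x y : M, inn x y = a} : Submodule ℂ A) : Set A)

open Filter Topology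

/-- a generalized derivation on a simple full Hilbert C*-module is either
closable or has dense range. -/
theorem generalized_derivation_closable_or_dense_range {A M : Type*} [CStarAlgebra A]
    [NormedAddCommGroup M] [NormedSpace ℂ M] [Module A M] [IsScalarTower ℂ A M]
    [IsBoundedSMul A M]
    (innM : M → M → A) (hM : IsHilbertModule A innM) (hfull : IsFullModule A innM)
    (hsimple : ∀ S : Submodule A M, IsClosed (S : Set M) → S = ⊥ ∨ S = ⊤)
    (Dd : NonUnitalSubalgebra ℂ A) (hDd : Dense (Dd : Set A))
    (Dδ : Submodule ℂ M) (hDδ : Dense (Dδ : Set M))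
    (hmod : ∀ a ∈ Dd, ∀ x ∈ Dδ, a • x ∈ Dδ)
    (δ : M → M) (d : A → A)
    (hδadd : ∀ x ∈ Dδ, ∀ y ∈ Dδ, δ (x + y) = δ x + δ y)
    (hδsmul : ∀ (z : ℂ), ∀ x ∈ Dδ, δ (z • x) = z • δ x)
    (hd : ∀ a ∈ Dd, ∀ b ∈ Dd, d (a * b) = a * d b + d a * b)
    (hLeib : ∀ a ∈ Dd, ∀ x ∈ Dδ, δ (a • x) = a • δ x + d a • x) :
    (∀ (u : ℕ → M), (∀ n, u n ∈ Dδ) → Tendsto u atTop (𝓝 0) →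
        ∀ y : M, Tendsto (fun n => δ (u n)) atTop (𝓝 y) → y = 0) ∨
      Dense (δ '' (Dδ : Set M)) := by
  classical
  set S : Set M := {y | ∃ u : ℕ → M, (∀ n, u n ∈ Dδ) ∧ Tendsto u atTop (𝓝 0) ∧
      Tendsto (fun n => δ (u n)) atTop (𝓝 y)} with hSdef
  have hδ0 : δ 0 = 0 := by
    have h := hδsmul 0 0 Dδ.zero_mem
    simpa using h
  have hzero : (0 : M) ∈ S := by
    refine ⟨fun _ => 0, fun _ => Dδ.zero_mem, tendsto_const_nhds, ?_⟩
    simpa [hδ0] using (tendsto_const_nhds : Tendsto (fun _ : ℕ => (0:M)) atTop (𝓝 0))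
  have hadd : ∀ y z : M, y ∈ S → z ∈ S → y + z ∈ S := by
    rintro y z ⟨u, hu, hu0, huδ⟩ ⟨v, hv, hv0, hvδ⟩
    refine ⟨fun n => u n + v n, fun n => Dδ.add_mem (hu n) (hv n),
      by simpa using hu0.add hv0, ?_⟩
    have heq : ∀ n, δ (u n + v n) = δ (u n) + δ (v n) := fun n => hδadd _ (hu n) _ (hv n)
    simp only [heq]
    exact huδ.add hvδ
  have hclosed : IsClosed S := by
    rw [← isSeqClosed_iff_isClosed]
    intro y p hyS hyp
    choose u hu hu0 huδ using hyS
    have key : ∀ k : ℕ, ∃ n, ‖u k n‖ < 1/(k+1 : ℝ) ∧ ‖δ (u k n) - y k‖ < 1/(k+1 : ℝ) := by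
      intro k
      have h1 : ∀ᶠ n in atTop, ‖u k n‖ < 1/(k+1 : ℝ) := by
        have := NormedAddCommGroup.tendsto_nhds_zero.mp (hu0 k) (1/(k+1 : ℝ)) (by positivity)
        exact this
      have h2 : ∀ᶠ n in atTop, ‖δ (u k n) - y k‖ < 1/(k+1 : ℝ) := by
        have := tendsto_iff_norm_sub_tendsto_zero.mp (huδ k)
        have := this.eventually (gt_mem_nhds (show (0:ℝ) < 1/(k+1 : ℝ) by positivity))
        exact this
      exact (h1.and h2).exists
    choose n hn1 hn2 using key
    have hlim : Tendsto (fun k : ℕ => 1/(k+1 : ℝ)) atTop (𝓝 0) :=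
      tendsto_one_div_add_atTop_nhds_zero_nat
    refine ⟨fun k => u k (n k), fun k => hu k (n k), ?_, ?_⟩
    · exact squeeze_zero_norm (fun k => (hn1 k).le) hlim
    · rw [tendsto_iff_norm_sub_tendsto_zero]
      have hb : ∀ k, ‖δ (u k (n k)) - p‖ ≤ 1/(k+1 : ℝ) + ‖y k - p‖ := by
        intro k
        calc ‖δ (u k (n k)) - p‖ = ‖(δ (u k (n k)) - y k) + (y k - p)‖ := by
              rw [sub_add_sub_cancel]
          _ ≤ ‖δ (u k (n k)) - y k‖ + ‖y k - p‖ := norm_add_le _ _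
          _ ≤ 1/(k+1 : ℝ) + ‖y k - p‖ := by
              have := (hn2 k).le; linarith
      have hblim : Tendsto (fun k : ℕ => 1/(k+1 : ℝ) + ‖y k - p‖) atTop (𝓝 0) := by
        have h3 := tendsto_iff_norm_sub_tendsto_zero.mp hyp
        simpa using hlim.add h3
      exact squeeze_zero (fun k => norm_nonneg _) hb hblim
  have hsmulDd : ∀ a ∈ Dd, ∀ y ∈ S, a • y ∈ S := by
    rintro a ha y ⟨u, hu, hu0, huδ⟩
    refine ⟨fun n => a • u n, fun n => hmod a ha _ (hu n), ?_, ?_⟩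
    · simpa using hu0.const_smul a
    · have heq : ∀ n, δ (a • u n) = a • δ (u n) + d a • u n := fun n => hLeib a ha _ (hu n)
      simp only [heq]
      simpa using (huδ.const_smul a).add (hu0.const_smul (d a))
  have hsmul : ∀ (a : A), ∀ y ∈ S, a • y ∈ S := by
    intro a y hy
    have hcont : Continuous (fun b : A => b • y) := continuous_id.smul continuous_const
    have hTclosed : IsClosed {b : A | b • y ∈ S} := hclosed.preimage hcont
    have hTdense : Dense {b : A | b • y ∈ S} :=
      hDd.mono (fun b hb => hsmulDd b hb y hy)
    have : {b : A | b • y ∈ S} = Set.univ := hTclosed.closure_eq ▸ hTdense.closure_eq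
    exact (Set.eq_univ_iff_forall.mp this a)
  let Ssub : Submodule A M :=
    { carrier := S
      add_mem' := fun hx hy => hadd _ _ hx hy
      zero_mem' := hzero
      smul_mem' := fun a {x} hx => hsmul a x hx }
  rcases hsimple Ssub hclosed with hbot | htop
  · left
    intro u hu hu0 y hy
    have hyS : y ∈ Ssub := ⟨u, hu, hu0, hy⟩
    rw [hbot] at hyS
    simpa using hyS
  · right
    rw [dense_iff_closure_eq]
    apply Set.eq_univ_of_forall
    intro y
    have hyS : y ∈ Ssub := by rw [htop]; trivial
    obtain ⟨u, hu, hu0, huδ⟩ := hyS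
    exact mem_closure_of_tendsto huδ (Eventually.of_forall fun n => ⟨u n, hu n, rfl⟩)
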